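/- Among any 2γ consecutive beep rounds of a later-starting processor (start time t₂ > t₁), at least γ of these rounds are rounds in which the earlier-starting processor (start time t₁) does not beep, where both follow the schedule b(i) = 4γi + i(i+1)/2 offset by their start times. -/

import Mathlib

open Classical in
/-- Among any 2γ consecutive beep rounds of a later-starting processor,
at least γ are rounds in which the earlier-starting processor does not beep. -/
theorem at_least_gamma_heard_slots (γ t₁ t₂ j : ℕ) (hγ : 1 ≤ γ) (ht : t₁ < t₂)
    (b : ℕ → ℕ) (hb : ∀ i, b i = 4 * γ * i + i * (i + 1) / 2) :
    γ ≤ ((Finset.range (2 * γ)).filter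
      (fun l => ∀ k, t₂ + b (j + l) ≠ t₁ + b k)).card := by
  classical
  -- doubled beep function is polynomial
  have hβ : ∀ i, 2 * b i = 8 * γ * i + i * (i + 1) := by
    intro i
    have h2 : 2 ∣ i * (i + 1) := (Nat.even_mul_succ_self i).two_dvd
    rw [hb]
    obtain ⟨c, hc⟩ := h2
    rw [hc]
    have hcc : 2 * c / 2 = c := by omega
    rw [hcc]; ring
  -- strict monotonicity of doubled beep polynomial
  have mono : ∀ m n : ℕ, m < n → 8 * γ * m + m * (m + 1) < 8 * γ * n + n * (n + 1) := by
    intro m n h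
    have h1 : 8 * γ * m ≤ 8 * γ * n := Nat.mul_le_mul_left _ h.le
    have h2 : m * (m + 1) < n * (n + 1) := by nlinarith
    linarith
  -- key: no two adjacent collision slots
  have key : ∀ l k k', t₂ + b (j + l) = t₁ + b k →
      t₂ + b (j + l + 1) = t₁ + b k' → False := by
    intro l k k' e1 e2
    set A := j + l with hA
    have hb1 : 2 * t₂ + (8 * γ * A + A * (A + 1)) = 2 * t₁ + (8 * γ * k + k * (k + 1)) := by
      have h1 := hβ A; have h2 := hβ k
      have e1' : 2 * t₂ + 2 * b A = 2 * t₁ + 2 * b k := by omega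
      omega
    have hb2 : 2 * t₂ + (8 * γ * (A + 1) + (A + 1) * (A + 1 + 1)) =
        2 * t₁ + (8 * γ * k' + k' * (k' + 1)) := by
      have h1 := hβ (A + 1); have h2 := hβ k'
      have e2' : 2 * t₂ + 2 * b (A + 1) = 2 * t₁ + 2 * b k' := by omega
      omega
    -- k > A
    have hkA : A < k := by
      by_contra h
      push_neg at h
      rcases eq_or_lt_of_le h with h' | h'
      · subst h'; omega
      · have := mono k A h'; omega
    -- k' > k
    have hkk' : k < k' := by
      by_contra h
      push_neg at h
      rcases eq_or_lt_of_le h with h' | h'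
      · subst h'; nlinarith
      · have := mono k' k h'; nlinarith
    obtain ⟨g, hg, hkg⟩ : ∃ g, 1 ≤ g ∧ k = A + g := ⟨k - A, by omega, by omega⟩
    obtain ⟨g', hg', hkg'⟩ : ∃ g', 1 ≤ g' ∧ k' = A + 1 + g' := ⟨k' - (A + 1), by omega, by omega⟩
    have hgg' : g ≤ g' := by omega
    subst hkg hkg'
    have hint : g * (8 * γ + 2 * A + g + 3) ≤ g' * (8 * γ + 2 * A + g' + 3) :=
      Nat.mul_le_mul hgg' (by omega)
    nlinarith [hb1, hb2, hint, hg, hγ]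
  -- counting
  have hcard := Finset.card_filter_add_card_filter_not
    (s := Finset.range (2 * γ)) (p := fun l => ∀ k, t₂ + b (j + l) ≠ t₁ + b k)
  rw [Finset.card_range] at hcard
  set S := (Finset.range (2 * γ)).filter
    (fun l => ¬ ∀ k, t₂ + b (j + l) ≠ t₁ + b k) with hSdef
  have hScoll : ∀ l ∈ S, ∃ k, t₂ + b (j + l) = t₁ + b k := by
    intro l hl
    have h2 := (Finset.mem_filter.mp hl).2
    simp only [not_forall, not_ne_iff] at h2
    exact h2
  have hSle : S.card ≤ γ := by
    have : S.card ≤ (Finset.range γ).card := by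
      apply Finset.card_le_card_of_injOn (fun l => l / 2)
      · intro a ha
        have : a ∈ Finset.range (2 * γ) := Finset.mem_filter.mp ha |>.1
        rw [Finset.mem_coe, Finset.mem_range]
        show a / 2 < γ
        rw [Finset.mem_range] at this
        omega
      · intro a ha c hc hac
        by_contra hne
        simp only at hac
        -- wlog a < c ; then c = a + 1
        rcases Nat.lt_or_ge a c with h | h
        · have hc1 : c = a + 1 := by omega
          obtain ⟨k, hk⟩ := hScoll a ha
          obtain ⟨k', hk'⟩ := hScoll c hc
          rw [hc1] at hk'
          exact key a k k' hk (by rw [Nat.add_assoc]; exact hk')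
        · have hlt : c < a := by omega
          have ha1 : a = c + 1 := by omega
          obtain ⟨k, hk⟩ := hScoll c hc
          obtain ⟨k', hk'⟩ := hScoll a ha
          rw [ha1] at hk'
          exact key c k k' hk (by rw [Nat.add_assoc]; exact hk')
    simpa using this
  omega
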